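/- Let n ≥ 1. A bipartition λ of 2n−2 has the property that its symbol of charge σ₁ = (−2,1) has n-co-core equal to the trivial symbol if and only if λ = 2^i1^{j−i−1}.(n−i−1)(n−j) for some 0 ≤ i < j ≤ n. There are exactly n(n+1)/2 such bipartitions. -/

import Mathlib

open scoped Classical

noncomputable section

/-- A partition: an antitone, eventually zero sequence of natural numbers.
`parts k` is the `(k+1)`-st part `λ_{k+1}`. -/
structure Partition' where
  parts : ℕ → ℕ
  antitone' : Antitone parts
  exists_zero : ∃ N, parts N = 0

namespace Partition'

lemma sorted_getD_antitone {l : List ℕ} (h : l.Pairwise (· ≥ ·)) :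
    Antitone (fun k => l.getD k 0) := by
  intro i j hij
  simp only
  rcases lt_or_ge j l.length with hj | hj
  · have hi : i < l.length := lt_of_le_of_lt hij hj
    rw [List.getD_eq_getElem l 0 hj, List.getD_eq_getElem l 0 hi]
    rcases eq_or_lt_of_le hij with rfl | hlt
    · exact le_rfl
    · exact List.pairwise_iff_getElem.mp h i j hi hj hlt
  · rw [List.getD_eq_default l 0 hj]
    exact Nat.zero_le _

/-- The partition whose multiset of (nonzero) parts is the multiset of nonzero
elements of `m`. -/
def ofMul (m : Multiset ℕ) : Partition' where
  parts := fun k => ((m.sort (· ≤ ·)).reverse).getD k 0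
  antitone' := by
    apply sorted_getD_antitone
    rw [List.pairwise_reverse]
    exact Multiset.pairwise_sort (s := m) (r := fun a b => a ≤ b)
  exists_zero := ⟨((m.sort (· ≤ ·)).reverse).length, List.getD_eq_default _ _ le_rfl⟩

/-- The size `|λ|` of a partition: the sum of its parts. -/
def size (p : Partition') : ℕ := ∑ i ∈ Finset.range (Nat.find p.exists_zero), p.parts i

lemma finite_gt (p : Partition') (k : ℕ) : {i : ℕ | k < p.parts i}.Finite := by
  obtain ⟨N, hN⟩ := p.exists_zero
  apply (Set.finite_Iio N).subset
  intro i hi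
  simp only [Set.mem_setOf_eq] at hi
  by_contra hc
  simp only [Set.mem_Iio, not_lt] at hc
  have := p.antitone' hc
  omega

/-- The conjugate (transpose) partition. -/
def conj (p : Partition') : Partition' where
  parts := fun k => {i : ℕ | k < p.parts i}.ncard
  antitone' := fun a b hab =>
    Set.ncard_le_ncard (fun i hi => lt_of_le_of_lt hab hi) (p.finite_gt a)
  exists_zero := by
    refine ⟨p.parts 0, ?_⟩
    have h : {i : ℕ | p.parts 0 < p.parts i} = ∅ := by
      ext i
      simp only [Set.mem_setOf_eq, Set.mem_empty_iff_false, iff_false, not_lt]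
      exact p.antitone' (Nat.zero_le i)
    show {i : ℕ | p.parts 0 < p.parts i}.ncard = 0
    rw [h, Set.ncard_empty]

/-- The 180°-rotation of the complement of `p` inside the rectangle with
`rows` rows of length `c`: the partition `(c - p_rows, c - p_{rows-1}, …, c - p₁)`. -/
def rotCompl (c rows : ℕ) (p : Partition') : Partition' where
  parts := fun k => if k < rows then c - p.parts (rows - 1 - k) else 0
  antitone' := by
    intro a b hab
    by_cases hb : b < rows
    · have ha : a < rows := lt_of_le_of_lt hab hb
      simp only [if_pos hb, if_pos ha]
      exact Nat.sub_le_sub_left (p.antitone' (by omega)) c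
    · simp only [if_neg hb]
      exact Nat.zero_le _
  exists_zero := ⟨rows, by simp⟩

end Partition'

/-- A bipartition: a pair of partitions. -/
abbrev Bipartition := Partition' × Partition'

/-- The size of a bipartition. -/
def Bipartition.size (l : Bipartition) : ℕ := l.1.size + l.2.size

/-- The bipartition whose components have parts the multisets `a` and `b`. -/
def bip (a b : Multiset ℕ) : Bipartition := (Partition'.ofMul a, Partition'.ofMul b)

/-- The multiset of parts of the partition `a 1^b` (one part `a`, then `b` parts `1`). -/
def hook (a b : ℕ) : Multiset ℕ := a ::ₘ Multiset.replicate b 1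

/-- The charged β-set of a partition, as a sequence:
`betaSet p s i = λ_{i+1} + s - (i+1) + 1`. -/
def betaSet (p : Partition') (s : ℤ) (i : ℕ) : ℤ := (p.parts i : ℤ) + s - i

/-- The charged symbol of a bipartition with charge `σ`, as a pair of subsets of `ℤ`. -/
def symbolOf (l : Bipartition) (σ : ℤ × ℤ) : Set ℤ × Set ℤ :=
  (Set.range (betaSet l.1 σ.1), Set.range (betaSet l.2 σ.2))

/-- The charge `σ_t`. -/
def sigmaT (t : ℕ) : ℤ × ℤ :=
  if Even t then ((t : ℤ), -1 - (t : ℤ)) else (-1 - (t : ℤ), (t : ℤ))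

/-- The trivial symbol `({0,-1,-2,…},{-1,-2,-3,…})`, the symbol of the empty
bipartition with charge `σ₀ = (0,-1)`. -/
def trivialSymbol : Set ℤ × Set ℤ := ({z : ℤ | z ≤ 0}, {z : ℤ | z ≤ -1})

/-- Removing one `n`-co-hook from the symbol `Λ`, yielding `Λ'`: remove `x+n` from one
row, adjoin `x` to the other row, and exchange the two rows. -/
def CohookStep (n : ℕ) (Λ Λ' : Set ℤ × Set ℤ) : Prop :=
  (∃ x : ℤ, x + n ∈ Λ.1 ∧ x ∉ Λ.2 ∧ Λ' = (Λ.2 ∪ {x}, Λ.1 \ {x + n})) ∨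
  (∃ x : ℤ, x + n ∈ Λ.2 ∧ x ∉ Λ.1 ∧ Λ' = (Λ.2 \ {x + n}, Λ.1 ∪ {x}))

/-- `C` is the `n`-co-core of `Λ`: it is obtained from `Λ` by recursively removing
`n`-co-hooks, and no further `n`-co-hook can be removed. -/
def IsCocore (n : ℕ) (Λ C : Set ℤ × Set ℤ) : Prop :=
  Relation.ReflTransGen (CohookStep n) Λ C ∧ ∀ C', ¬ CohookStep n C C'

/-- Number of entries of the charged β-set of `p` that are `≥ α` (with multiplicity). -/
def betaCountGE (p : Partition') (s α : ℤ) : ℕ := Nat.card {i : ℕ // α ≤ betaSet p s i}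

/-- Number of entries `≥ α`, with multiplicity, of the multiset union of the two rows
of the symbol of `l` with charge `σ`. -/
def symCountGE (l : Bipartition) (σ : ℤ × ℤ) (α : ℤ) : ℕ :=
  betaCountGE l.1 σ.1 α + betaCountGE l.2 σ.2 α

/-- The composition `ϖ_Λ` of the symbol of `l` with charge `σ`: `comp l σ k` is the
`(k+1)`-st largest entry (with multiplicity) of the multiset union of the two rows. -/
def comp (l : Bipartition) (σ : ℤ × ℤ) (k : ℕ) : ℤ :=
  sSup {z : ℤ | k + 1 ≤ symCountGE l σ z}

/-- All partial sums of the composition of the symbol `(l,σ)` are bounded by those of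
`(m,τ)`. -/
def DomLE (l : Bipartition) (σ : ℤ × ℤ) (m : Bipartition) (τ : ℤ × ℤ) : Prop :=
  ∀ j : ℕ, ∑ k ∈ Finset.range j, comp l σ k ≤ ∑ k ∈ Finset.range j, comp m τ k

/-- Strict dominance `Λ ⊲ Λ'` of symbols: the compositions differ and all partial sums
of the first are bounded by those of the second. -/
def DomLT (l : Bipartition) (σ : ℤ × ℤ) (m : Bipartition) (τ : ℤ × ℤ) : Prop :=
  comp l σ ≠ comp m τ ∧ DomLE l σ m τ

/-- A box `(x, y, j)` (0-indexed row `x`, 0-indexed column `y`, component `j`: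
`j = 0` is the first component, `j = 1` the second). -/
abbrev Box := ℕ × ℕ × Fin 2

/-- The component of a bipartition selected by `j : Fin 2`. -/
def Bipartition.partsOf (l : Bipartition) (j : Fin 2) : Partition' := if j = 0 then l.1 else l.2

/-- Membership of a box in the Young diagram of a bipartition. -/
def MemY (l : Bipartition) (b : Box) : Prop := b.2.1 < (l.partsOf b.2.2).parts b.1

/-- The entry of the charge `σ` corresponding to component `j`. -/
def chargeOf (σ : ℤ × ℤ) (j : Fin 2) : ℤ := if j = 0 then σ.1 else σ.2

/-- The charged content `co^σ(b) = y - x + σ_j` of a box. -/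
def content (σ : ℤ × ℤ) (b : Box) : ℤ := (b.2.1 : ℤ) - (b.1 : ℤ) + chargeOf σ b.2.2

/-- `j(b) ∈ {1,2}`: the component of a box, numbered 1 or 2. -/
def jval (b : Box) : ℕ := (b.2.2 : ℕ) + 1

/-- The counting function of the Dunkl–Griffeth order. -/
def dgCount (l : Bipartition) (s : ℤ × ℤ) (d : ℕ) (α : ℝ) (j : ℕ) : ℕ :=
  Nat.card {b : Box // MemY l b ∧
    (α < (content s b : ℝ) - (jval b : ℝ) * (d : ℝ) / 2 ∨
      ((content s b : ℝ) - (jval b : ℝ) * (d : ℝ) / 2 = α ∧ jval b ≤ j))}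

/-- The Dunkl–Griffeth order `λ ⪯_s μ` (with respect to `d`). -/
def DGLE (l m : Bipartition) (s : ℤ × ℤ) (d : ℕ) : Prop :=
  ∀ (α : ℝ), ∀ j ∈ ({1, 2} : Set ℕ), dgCount l s d α j ≤ dgCount m s d α j

/-- A box of the extended Young diagram: rows are infinite to the left, so the column
coordinate is an integer.  `(x, y, j)` is the box in (0-indexed) row `x`, with integer
column coordinate `y` (`y = 0` is the first column), in component `j`. -/
abbrev ExtBox := ℕ × ℤ × Fin 2

/-- Membership in the extended Young diagram of a bipartition. -/
def MemExtY (l : Bipartition) (b : ExtBox) : Prop :=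
  b.2.1 < ((l.partsOf b.2.2).parts b.1 : ℤ)

/-- The charged content of an extended box. -/
def contentExt (σ : ℤ × ℤ) (b : ExtBox) : ℤ := b.2.1 - (b.1 : ℤ) + chargeOf σ b.2.2

/-- `b` is a removable box of the bipartition `l`. -/
def Removable (l : Bipartition) (b : Box) : Prop :=
  (l.partsOf b.2.2).parts b.1 = b.2.1 + 1 ∧ (l.partsOf b.2.2).parts (b.1 + 1) ≤ b.2.1

/-- `b` is an addable box of the bipartition `l`. -/
def Addable (l : Bipartition) (b : Box) : Prop :=
  (l.partsOf b.2.2).parts b.1 = b.2.1 ∧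
    (b.1 = 0 ∨ b.2.1 + 1 ≤ (l.partsOf b.2.2).parts (b.1 - 1))

/-- The order in which boxes are listed in the `i`-word: increasing charged content,
a component-2 box preceding a component-1 box of equal charged content. -/
def BoxLT (σ : ℤ × ℤ) (b b' : Box) : Prop :=
  content σ b < content σ b' ∨
    (content σ b = content σ b' ∧ b.2.2 = 1 ∧ b'.2.2 = 0)

/-- `L` is the list of boxes underlying the `i`-word of `(l, σ)` with respect to `d`:
it lists, in increasing order, exactly the addable and removable boxes of `l` whose
charged content is congruent to `i` modulo `d`. -/
def IsIWord (l : Bipartition) (σ : ℤ × ℤ) (d : ℕ) (i : ZMod d) (L : List Box) : Prop :=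
  L.Pairwise (BoxLT σ) ∧
    ∀ b : Box, b ∈ L ↔ ((Addable l b ∨ Removable l b) ∧ ((content σ b : ZMod d) = i))

/-- The sign of a box in the `i`-word: `true` (`+`) for addable, `false` (`−`) for
removable boxes. -/
def signOf (l : Bipartition) (b : Box) : Bool := if Addable l b then true else false

/-- One reduction step on words: delete an adjacent pair `−+`. -/
def RedStep (w w' : List Bool) : Prop :=
  ∃ u v : List Bool, w = u ++ false :: true :: v ∧ w' = u ++ v

/-- `ẽ_i l = 0`: the reduced `i`-word of `(l, σ)` contains no `−`, i.e. the `i`-word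
reduces to a word consisting only of `+`'s. -/
def AnnihilatedE (l : Bipartition) (σ : ℤ × ℤ) (d : ℕ) (i : ZMod d) : Prop :=
  ∃ L : List Box, IsIWord l σ d i L ∧
    ∃ a : ℕ, Relation.ReflTransGen RedStep (L.map (signOf l)) (List.replicate a true)

/-- `q` is obtained from the partition `p` by adding one box. -/
def PCovers (p q : Partition') : Prop :=
  ∃ x : ℕ, q.parts x = p.parts x + 1 ∧ ∀ y : ℕ, y ≠ x → q.parts y = p.parts y

/-- `m` is obtained from the bipartition `l` by adding one box to its Young diagram. -/
def BipCovers (l m : Bipartition) : Prop :=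
  (PCovers l.1 m.1 ∧ m.2 = l.2) ∨ (m.1 = l.1 ∧ PCovers l.2 m.2)

/-- `A(l) = Σ_μ μ`, the sum over all bipartitions obtained from `l` by adding one box,
as an element of the group of `ℤ`-valued functions on bipartitions. -/
def addB (l : Bipartition) : Bipartition → ℤ := fun m => if BipCovers l m then 1 else 0

/-- The projection `π_S` onto the span of the bipartitions lying in `S`. -/
def projS (S : Set Bipartition) (f : Bipartition → ℤ) : Bipartition → ℤ :=
  fun m => if m ∈ S then f m else 0

/-- The basis element of `ℤ[BP]` corresponding to a bipartition. -/
def deltaB (l : Bipartition) : Bipartition → ℤ := fun m => if m = l then 1 else 0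

/-- The bipartitions of `2n` labelling the principal-series unipotent characters in
the principal `Φ_{2n}`-block. -/
def PS (n : ℕ) : Set Bipartition :=
  {l | (∃ i j : ℕ, 0 < i ∧ i < n ∧ j ≤ n ∧
          l = bip (hook (n - i) j) (hook (n - j + 1) (i - 1))) ∨
       (∃ j : ℕ, j < 2 * n ∧ l = bip (hook (2 * n - j) j) 0) ∨
       (∃ i : ℕ, 0 < i ∧ i ≤ 2 * n ∧ l = bip 0 (hook (2 * n - i + 1) (i - 1)))}

/-- The bipartitions of `2n-2` labelling the `B₂`-series unipotent characters in the
principal `Φ_{2n}`-block: `2^i 1^{j-i-1} . (n-i-1)(n-j)` for `0 ≤ i < j ≤ n`. -/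
def LB2 (n : ℕ) : Set Bipartition :=
  {l | ∃ i j : ℕ, i < j ∧ j ≤ n ∧
        l = bip (Multiset.replicate i 2 + Multiset.replicate (j - i - 1) 1)
                {n - i - 1, n - j}}

/-- The bipartitions of `2n-6` labelling the `B₆`-series unipotent characters in the
principal `Φ_{2n}`-block: `(n-i-2)(n-j-1) . 2^{i-1} 1^{j-i-1}` for `0 < i < j < n`. -/
def LB6 (n : ℕ) : Set Bipartition :=
  {l | ∃ i j : ℕ, 0 < i ∧ i < j ∧ j < n ∧
        l = bip {n - i - 2, n - j - 1}
                (Multiset.replicate (i - 1) 2 + Multiset.replicate (j - i - 1) 1)}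

end




noncomputable section Aux

/-- Sets of integers that are cofinite below and finite above. -/
def Bdd' (X : Set ℤ) : Prop := ∃ a b : ℤ, (∀ z ≤ a, z ∈ X) ∧ (∀ z, b ≤ z → z ∉ X)

def wfun (X : Set ℤ) (z : ℤ) : ℤ :=
  if 1 ≤ z ∧ z ∈ X then z else if z ≤ 0 ∧ z ∉ X then -z else 0

lemma wfun_nonneg (X : Set ℤ) (z : ℤ) : 0 ≤ wfun X z := by
  unfold wfun; split_ifs with h1 h2 <;> omega

lemma wfun_support (X : Set ℤ) {a b : ℤ} (ha : ∀ z ≤ a, z ∈ X) (hb : ∀ z, b ≤ z → z ∉ X) :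
    Function.support (wfun X) ⊆ Set.Icc (min a 0) (max b 1) := by
  intro z hz
  simp only [Function.mem_support] at hz
  by_contra hc
  simp only [Set.mem_Icc, not_and_or, not_le] at hc
  apply hz
  unfold wfun
  rcases hc with hc | hc
  · have hzX : z ∈ X := ha z (by omega)
    have : ¬ (1 ≤ z) := by omega
    simp [this, hzX]
  · have hzX : z ∉ X := hb z (by omega)
    have : ¬ (z ≤ 0) := by omega
    simp [this, hzX]

lemma wfun_support_finite {X : Set ℤ} (h : Bdd' X) : (Function.support (wfun X)).Finite := by
  obtain ⟨a, b, ha, hb⟩ := h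
  exact (Set.finite_Icc _ _).subset (wfun_support X ha hb)

/-- The weight of a bounded set. -/
def wt (X : Set ℤ) : ℤ := ∑ᶠ z, wfun X z

lemma wt_nonneg (X : Set ℤ) : 0 ≤ wt X := finsum_nonneg (wfun_nonneg X)

lemma Bdd'.insert {X : Set ℤ} (h : Bdd' X) (x : ℤ) : Bdd' (X ∪ {x}) := by
  obtain ⟨a, b, ha, hb⟩ := h
  exact ⟨a, max b (x + 1), fun z hz => Or.inl (ha z hz),
    fun z hz => by
      simp only [Set.mem_union, Set.mem_singleton_iff, not_or]
      exact ⟨hb z (by omega), by omega⟩⟩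

lemma Bdd'.remove {X : Set ℤ} (h : Bdd' X) (y : ℤ) : Bdd' (X \ {y}) := by
  obtain ⟨a, b, ha, hb⟩ := h
  exact ⟨min a (y - 1), b, fun z hz => ⟨ha z (by omega), by simp; omega⟩,
    fun z hz => fun hc => hb z hz hc.1⟩

lemma wt_insert {X : Set ℤ} (h : Bdd' X) {x : ℤ} (hx : x ∉ X) : wt (X ∪ {x}) = wt X + x := by
  have key : wfun (X ∪ {x}) = fun z => wfun X z + (if z = x then x else 0) := by
    funext z
    unfold wfun
    by_cases hzx : z = x
    · subst hzx
      simp only [Set.mem_union, Set.mem_singleton_iff, if_pos rfl]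
      rcases le_or_gt 1 z with h1 | h1
      · simp [h1, hx, show ¬ (z ≤ 0) by omega]
      · simp [show ¬ (1 ≤ z) by omega, hx, show z ≤ 0 by omega]
    · have : (z ∈ X ∪ {x}) ↔ z ∈ X := by simp [hzx]
      simp only [this, if_neg hzx, add_zero]
  have hsub : Function.support (fun z : ℤ => if z = x then x else 0) ⊆ {x} := by
    intro z hz
    simp only [Function.mem_support] at hz
    by_contra hc
    simp only [Set.mem_singleton_iff] at hc
    simp [hc] at hz
  rw [wt, key, finsum_add_distrib (wfun_support_finite h) ((Set.finite_singleton x).subset hsub)]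
  rw [finsum_eq_single (fun z : ℤ => if z = x then x else 0) x (by intro b hb; simp [hb])]
  simp [wt]

lemma wt_remove {X : Set ℤ} (h : Bdd' X) {y : ℤ} (hy : y ∈ X) : wt (X \ {y}) = wt X - y := by
  have h1 : (X \ {y}) ∪ {y} = X := by
    ext z; simp only [Set.mem_union, Set.mem_diff, Set.mem_singleton_iff]
    constructor
    · rintro (⟨hz, _⟩ | rfl) <;> [exact hz; exact hy]
    · intro hz; by_cases hzy : z = y <;> simp [hzy, hz]
  have := wt_insert (h.remove y) (x := y) (by simp)
  rw [h1] at this; omega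

/-- The charge of a bounded set. -/
def ch (X : Set ℤ) : ℤ :=
  ({z : ℤ | 1 ≤ z ∧ z ∈ X}.ncard : ℤ) - ({z : ℤ | z ≤ 0 ∧ z ∉ X}.ncard : ℤ)

lemma ch_sets_finite {X : Set ℤ} (h : Bdd' X) :
    {z : ℤ | 1 ≤ z ∧ z ∈ X}.Finite ∧ {z : ℤ | z ≤ 0 ∧ z ∉ X}.Finite := by
  obtain ⟨a, b, ha, hb⟩ := h
  constructor
  · apply (Set.finite_Icc 1 b).subset
    rintro z ⟨h1, h2⟩
    simp only [Set.mem_Icc]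
    refine ⟨h1, ?_⟩
    by_contra hc; exact hb z (by omega) h2
  · apply (Set.finite_Icc a 0).subset
    rintro z ⟨h1, h2⟩
    simp only [Set.mem_Icc]
    refine ⟨?_, h1⟩
    by_contra hc; exact h2 (ha z (by omega))

lemma ch_insert {X : Set ℤ} (h : Bdd' X) {x : ℤ} (hx : x ∉ X) : ch (X ∪ {x}) = ch X + 1 := by
  obtain ⟨hf1, hf2⟩ := ch_sets_finite h
  rcases le_or_gt 1 x with h1 | h1
  · have e1 : {z : ℤ | 1 ≤ z ∧ z ∈ X ∪ {x}} = insert x {z : ℤ | 1 ≤ z ∧ z ∈ X} := by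
      ext z; simp only [Set.mem_union, Set.mem_singleton_iff, Set.mem_setOf_eq, Set.mem_insert_iff]
      constructor
      · rintro ⟨hz, hz2 | rfl⟩; exact Or.inr ⟨hz, hz2⟩; exact Or.inl rfl
      · rintro (rfl | ⟨hz, hz2⟩); exact ⟨h1, Or.inr rfl⟩; exact ⟨hz, Or.inl hz2⟩
    have e2 : {z : ℤ | z ≤ 0 ∧ z ∉ X ∪ {x}} = {z : ℤ | z ≤ 0 ∧ z ∉ X} := by
      ext z; simp only [Set.mem_union, Set.mem_singleton_iff, Set.mem_setOf_eq, not_or]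
      constructor
      · rintro ⟨hz, hz2, _⟩; exact ⟨hz, hz2⟩
      · rintro ⟨hz, hz2⟩; exact ⟨hz, hz2, by omega⟩
    rw [ch, ch, e1, e2, Set.ncard_insert_of_notMem (by simp [hx]) hf1]
    push_cast; ring
  · have e1 : {z : ℤ | 1 ≤ z ∧ z ∈ X ∪ {x}} = {z : ℤ | 1 ≤ z ∧ z ∈ X} := by
      ext z; simp only [Set.mem_union, Set.mem_singleton_iff, Set.mem_setOf_eq]
      constructor
      · rintro ⟨hz, hz2 | rfl⟩; exact ⟨hz, hz2⟩; omega
      · rintro ⟨hz, hz2⟩; exact ⟨hz, Or.inl hz2⟩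
    have e2 : insert x {z : ℤ | z ≤ 0 ∧ z ∉ X ∪ {x}} = {z : ℤ | z ≤ 0 ∧ z ∉ X} := by
      ext z; simp only [Set.mem_union, Set.mem_singleton_iff, Set.mem_setOf_eq, not_or,
        Set.mem_insert_iff]
      constructor
      · rintro (rfl | ⟨hz, hz2, _⟩); exact ⟨by omega, hx⟩; exact ⟨hz, hz2⟩
      · rintro ⟨hz, hz2⟩
        by_cases hzx : z = x; exact Or.inl hzx; exact Or.inr ⟨hz, hz2, hzx⟩
    have hxmem : x ∉ {z : ℤ | z ≤ 0 ∧ z ∉ X ∪ {x}} := by simp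
    have hfin : {z : ℤ | z ≤ 0 ∧ z ∉ X ∪ {x}}.Finite := (ch_sets_finite (h.insert x)).2
    have := Set.ncard_insert_of_notMem hxmem hfin
    rw [e2] at this
    rw [ch, ch, e1, this]
    push_cast; ring

lemma ch_remove {X : Set ℤ} (h : Bdd' X) {y : ℤ} (hy : y ∈ X) : ch (X \ {y}) = ch X - 1 := by
  have h1 : (X \ {y}) ∪ {y} = X := by
    ext z; simp only [Set.mem_union, Set.mem_diff, Set.mem_singleton_iff]
    constructor
    · rintro (⟨hz, _⟩ | rfl) <;> [exact hz; exact hy]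
    · intro hz; by_cases hzy : z = y <;> simp [hzy, hz]
  have := ch_insert (h.remove y) (x := y) (by simp)
  rw [h1] at this; omega



lemma betaSet_strictAnti (p : Partition') (s : ℤ) : StrictAnti (betaSet p s) := by
  apply strictAnti_nat_of_succ_lt
  intro k
  have := p.antitone' (show k ≤ k + 1 by omega)
  unfold betaSet
  push_cast
  omega

lemma parts_eq_zero (p : Partition') {k : ℕ} (hk : Nat.find p.exists_zero ≤ k) :
    p.parts k = 0 := by
  have h1 := Nat.find_spec p.exists_zero
  have := p.antitone' hk
  omega

lemma size_eq (p : Partition') {M : ℕ} (hM : Nat.find p.exists_zero ≤ M) :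
    p.size = ∑ i ∈ Finset.range M, p.parts i := by
  rw [Partition'.size]
  apply Finset.sum_subset
  · intro x hx
    simp only [Finset.mem_range] at *
    omega
  · intro x _ hx
    simp only [Finset.mem_range, not_lt] at hx
    exact parts_eq_zero p hx

lemma Bdd'_beta (p : Partition') (s : ℤ) : Bdd' (Set.range (betaSet p s)) := by
  refine ⟨s - Nat.find p.exists_zero, (p.parts 0 : ℤ) + s + 1, ?_, ?_⟩
  · intro z hz
    refine ⟨(s - z).toNat, ?_⟩
    have h0 : Nat.find p.exists_zero ≤ (s - z).toNat := by omega
    have := parts_eq_zero p h0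
    unfold betaSet
    omega
  · rintro z hz ⟨k, hk⟩
    have h1 : p.parts k ≤ p.parts 0 := p.antitone' (Nat.zero_le k)
    unfold betaSet at hk
    omega

lemma strictAnti_range_eq {f g : ℕ → ℤ} (hf : StrictAnti f) (hg : StrictAnti g)
    (h : Set.range f = Set.range g) : f = g := by
  funext k
  induction k using Nat.strong_induction_on with
  | _ k ih =>
    have h1 : f k ∈ Set.range g := h ▸ Set.mem_range_self k
    have h2 : g k ∈ Set.range f := h ▸ Set.mem_range_self k
    obtain ⟨m, hm⟩ := h1
    obtain ⟨m', hm'⟩ := h2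
    have hle : f k ≤ g k := by
      rcases lt_or_ge m k with hmk | hmk
      · exfalso
        have hzz : f m = f k := by rw [ih m hmk]; exact hm
        have := hf.injective hzz
        omega
      · calc f k = g m := hm.symm
          _ ≤ g k := hg.antitone hmk
    have hge : g k ≤ f k := by
      rcases lt_or_ge m' k with hmk | hmk
      · exfalso
        have hzz : g m' = g k := by rw [← ih m' hmk]; exact hm'
        have := hg.injective hzz
        omega
      · calc g k = f m' := hm'.symm
          _ ≤ f k := hf.antitone hmk
    omega

lemma Partition'.ext' {p q : Partition'} (h : p.parts = q.parts) : p = q := by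
  cases p; cases q; simpa using h

lemma beta_range_inj {p q : Partition'} {s : ℤ}
    (h : Set.range (betaSet p s) = Set.range (betaSet q s)) : p = q := by
  have := strictAnti_range_eq (betaSet_strictAnti p s) (betaSet_strictAnti q s) h
  apply Partition'.ext'
  funext k
  have := congrFun this k
  unfold betaSet at this
  omega

lemma beta_range_zero (p : Partition') (hp : p.size = 0) (s : ℤ) :
    Set.range (betaSet p s) = {z : ℤ | z ≤ s} := by
  have hz : ∀ k, p.parts k = 0 := by
    intro k
    rcases lt_or_ge k (Nat.find p.exists_zero) with hk | hk
    · rw [Partition'.size] at hp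
      have := Finset.sum_eq_zero_iff.mp hp k (Finset.mem_range.mpr hk)
      exact this
    · exact parts_eq_zero p hk
  ext z
  simp only [Set.mem_range, Set.mem_setOf_eq]
  constructor
  · rintro ⟨k, rfl⟩
    unfold betaSet
    have := hz k
    omega
  · intro hzs
    refine ⟨(s - z).toNat, ?_⟩
    unfold betaSet
    have := hz (s - z).toNat
    omega

lemma beta_step (p : Partition') (hp : 0 < p.size) :
    ∃ p' : Partition', p'.size + 1 = p.size ∧ ∀ s : ℤ, ∃ v : ℤ,
      v ∈ Set.range (betaSet p s) ∧ v - 1 ∉ Set.range (betaSet p s) ∧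
      Set.range (betaSet p' s) = (Set.range (betaSet p s) \ {v}) ∪ {v - 1} := by
  set N := Nat.find p.exists_zero with hN
  have hNpos : 0 < N := by
    by_contra hc
    have h1 : Nat.find p.exists_zero ≤ 0 := by omega
    have : p.size = 0 := by rw [size_eq p h1]; simp
    omega
  set k := N - 1 with hk
  have hk1 : p.parts k ≠ 0 := Nat.find_min p.exists_zero (by omega)
  have hk2 : p.parts (k + 1) = 0 := parts_eq_zero p (by omega)
  have h0 : ∀ m, k < m → p.parts m = 0 := by
    intro m hm
    have := p.antitone' (show k + 1 ≤ m by omega)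
    omega
  obtain ⟨q, hq⟩ : ∃ q : Partition',
      q.parts = fun m => if m = k then p.parts k - 1 else p.parts m := by
    refine ⟨⟨_, ?_, ⟨k + 1, by
      show (if k + 1 = k then p.parts k - 1 else p.parts (k + 1)) = 0
      rw [if_neg (by omega)]; exact hk2⟩⟩, rfl⟩
    intro a b hab
    show (if b = k then p.parts k - 1 else p.parts b) ≤
      (if a = k then p.parts k - 1 else p.parts a)
    by_cases hbk : b = k
    · by_cases hak : a = k
      · simp [hak, hbk]
      · simp only [if_pos hbk, if_neg hak]
        have := p.antitone' (show a ≤ k by omega)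
        omega
    · by_cases hak : a = k
      · simp only [if_neg hbk, if_pos hak]
        have := h0 b (by omega)
        omega
      · simp only [if_neg hbk, if_neg hak]
        exact p.antitone' hab
  have hqk : q.parts k = p.parts k - 1 := by rw [hq]; simp
  have hqm : ∀ m, m ≠ k → q.parts m = p.parts m := by intro m hm; rw [hq]; simp [hm]
  refine ⟨q, ?_, ?_⟩
  · have hfq : Nat.find q.exists_zero ≤ N := Nat.find_le (by
      rw [hq]
      show (if N = k then _ else p.parts N) = 0
      rw [if_neg (by omega)]
      exact parts_eq_zero p (by omega))
    rw [size_eq q hfq, size_eq p (le_of_eq hN.symm)]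
    have hkmem : k ∈ Finset.range N := Finset.mem_range.mpr (by omega)
    rw [← Finset.add_sum_erase _ _ hkmem, ← Finset.add_sum_erase _ _ hkmem]
    have hsum : ∑ m ∈ (Finset.range N).erase k, q.parts m
        = ∑ m ∈ (Finset.range N).erase k, p.parts m := by
      apply Finset.sum_congr rfl
      intro m hm
      exact hqm m (Finset.ne_of_mem_erase hm)
    omega
  · intro s
    refine ⟨betaSet p s k, Set.mem_range_self k, ?_, ?_⟩
    · rintro ⟨m, hm⟩
      rcases lt_trichotomy m k with hmk | hmk | hmk
      · have := betaSet_strictAnti p s hmk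
        omega
      · subst hmk; omega
      · have h1 : betaSet p s m ≤ betaSet p s (k + 1) :=
          (betaSet_strictAnti p s).antitone (by omega)
        unfold betaSet at hm h1
        rw [hk2] at h1
        omega
    · have hbq : ∀ m, betaSet q s m =
          if m = k then betaSet p s k - 1 else betaSet p s m := by
        intro m
        by_cases hm : m = k
        · subst hm; unfold betaSet; rw [hqk, if_pos rfl]; omega
        · unfold betaSet; rw [hqm m hm, if_neg hm]
      ext z
      simp only [Set.mem_union, Set.mem_diff, Set.mem_singleton_iff, Set.mem_range]
      constructor
      · rintro ⟨m, hm⟩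
        rw [hbq m] at hm
        by_cases hmk : m = k
        · rw [if_pos hmk] at hm; exact Or.inr hm.symm
        · rw [if_neg hmk] at hm
          refine Or.inl ⟨⟨m, hm⟩, ?_⟩
          rw [← hm]
          exact fun hc => hmk ((betaSet_strictAnti p s).injective hc)
      · rintro (⟨⟨m, hm⟩, hz⟩ | hz)
        · refine ⟨m, ?_⟩
          rw [hbq m, if_neg (fun hc => hz (by rw [← hm, hc]))]
          exact hm
        · exact ⟨k, by rw [hbq k, if_pos rfl]; omega⟩

lemma wt_betaSet_aux : ∀ n : ℕ, ∀ p : Partition', p.size = n → ∀ s : ℤ,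
    wt (Set.range (betaSet p s)) = p.size + wt {z : ℤ | z ≤ s} ∧
    ch (Set.range (betaSet p s)) = ch {z : ℤ | z ≤ s} := by
  intro n
  induction n using Nat.strong_induction_on with
  | _ n ih =>
    intro p hp s
    rcases Nat.eq_zero_or_pos n with h0 | h0
    · rw [beta_range_zero p (by omega) s]
      subst h0
      rw [hp]
      constructor
      · push_cast; ring
      · rfl
    · obtain ⟨p', hsize, hstep⟩ := beta_step p (by omega)
      obtain ⟨v, hv, hv1, hrange⟩ := hstep s
      have hBdd := Bdd'_beta p s
      have hnotmem : v - 1 ∉ Set.range (betaSet p s) \ {v} := fun hc => hv1 hc.1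
      obtain ⟨ih1, ih2⟩ := ih p'.size (by omega) p' rfl s
      constructor
      · have h2 : wt (Set.range (betaSet p' s)) = wt (Set.range (betaSet p s)) - v + (v - 1) := by
          rw [hrange, wt_insert (hBdd.remove v) hnotmem, wt_remove hBdd hv]
        rw [h2] at ih1
        have : (p'.size : ℤ) + 1 = p.size := by omega
        omega
      · have h2 : ch (Set.range (betaSet p' s)) = ch (Set.range (betaSet p s)) - 1 + 1 := by
          rw [hrange, ch_insert (hBdd.remove v) hnotmem, ch_remove hBdd hv]
        rw [h2] at ih2
        omega

lemma wt_betaSet (p : Partition') (s : ℤ) :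
    wt (Set.range (betaSet p s)) = p.size + wt {z : ℤ | z ≤ s} :=
  (wt_betaSet_aux p.size p rfl s).1

lemma ch_betaSet (p : Partition') (s : ℤ) :
    ch (Set.range (betaSet p s)) = ch {z : ℤ | z ≤ s} :=
  (wt_betaSet_aux p.size p rfl s).2

lemma Bdd'_Iic (s : ℤ) : Bdd' {z : ℤ | z ≤ s} :=
  ⟨s, s + 1, fun z hz => hz, fun z hz hc => by simp only [Set.mem_setOf_eq] at hc; omega⟩

lemma wt_Iic_zero : wt {z : ℤ | z ≤ 0} = 0 := by
  have h : wfun {z : ℤ | z ≤ 0} = fun _ => 0 := by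
    funext z; unfold wfun; simp only [Set.mem_setOf_eq]; split_ifs <;> omega
  rw [wt, h]; exact finsum_zero

lemma wt_Iic_neg_one : wt {z : ℤ | z ≤ -1} = 0 := by
  have h : wfun {z : ℤ | z ≤ -1} = fun _ => 0 := by
    funext z; unfold wfun; simp only [Set.mem_setOf_eq]; split_ifs <;> omega
  rw [wt, h]; exact finsum_zero

lemma wt_Iic_neg_two : wt {z : ℤ | z ≤ -2} = 1 := by
  have h : wfun {z : ℤ | z ≤ -2} = fun z => if z = -1 then 1 else 0 := by
    funext z; unfold wfun; simp only [Set.mem_setOf_eq]; split_ifs <;> omega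
  rw [wt, h, finsum_eq_single _ (-1) (by intro b hb; simp [hb])]; simp

lemma wt_Iic_one : wt {z : ℤ | z ≤ 1} = 1 := by
  have h : wfun {z : ℤ | z ≤ 1} = fun z => if z = 1 then 1 else 0 := by
    funext z; unfold wfun; simp only [Set.mem_setOf_eq]; split_ifs <;> omega
  rw [wt, h, finsum_eq_single _ 1 (by intro b hb; simp [hb])]; simp

lemma ch_Iic_zero : ch {z : ℤ | z ≤ 0} = 0 := by
  have e1 : {z : ℤ | 1 ≤ z ∧ z ∈ {z : ℤ | z ≤ 0}} = ∅ := by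
    ext z; simp only [Set.mem_setOf_eq, Set.mem_empty_iff_false, iff_false]; omega
  have e2 : {z : ℤ | z ≤ 0 ∧ z ∉ {z : ℤ | z ≤ 0}} = ∅ := by
    ext z; simp only [Set.mem_setOf_eq, Set.mem_empty_iff_false, iff_false]; omega
  rw [ch, e1, e2]; simp

lemma ch_Iic_neg_one : ch {z : ℤ | z ≤ -1} = -1 := by
  have e1 : {z : ℤ | 1 ≤ z ∧ z ∈ {z : ℤ | z ≤ -1}} = ∅ := by
    ext z; simp only [Set.mem_setOf_eq, Set.mem_empty_iff_false, iff_false]; omega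
  have e2 : {z : ℤ | z ≤ 0 ∧ z ∉ {z : ℤ | z ≤ -1}} = {(0 : ℤ)} := by
    ext z; simp only [Set.mem_setOf_eq, Set.mem_singleton_iff]; omega
  rw [ch, e1, e2]; simp

lemma ch_Iic_neg_two : ch {z : ℤ | z ≤ -2} = -2 := by
  have e1 : {z : ℤ | 1 ≤ z ∧ z ∈ {z : ℤ | z ≤ -2}} = ∅ := by
    ext z; simp only [Set.mem_setOf_eq, Set.mem_empty_iff_false, iff_false]; omega
  have e2 : {z : ℤ | z ≤ 0 ∧ z ∉ {z : ℤ | z ≤ -2}} = {(-1 : ℤ), 0} := by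
    ext z; simp only [Set.mem_setOf_eq, Set.mem_insert_iff, Set.mem_singleton_iff]; omega
  rw [ch, e1, e2, Set.ncard_pair (by omega), Set.ncard_empty]; simp

lemma ch_Iic_one : ch {z : ℤ | z ≤ 1} = 1 := by
  have e1 : {z : ℤ | 1 ≤ z ∧ z ∈ {z : ℤ | z ≤ 1}} = {(1 : ℤ)} := by
    ext z; simp only [Set.mem_setOf_eq, Set.mem_singleton_iff]; omega
  have e2 : {z : ℤ | z ≤ 0 ∧ z ∉ {z : ℤ | z ≤ 1}} = ∅ := by
    ext z; simp only [Set.mem_setOf_eq, Set.mem_empty_iff_false, iff_false]; omega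
  rw [ch, e1, e2]; simp

lemma cohook_wt {n : ℕ} {Λ Λ' : Set ℤ × Set ℤ} (h : CohookStep n Λ Λ')
    (h1 : Bdd' Λ.1) (h2 : Bdd' Λ.2) :
    Bdd' Λ'.1 ∧ Bdd' Λ'.2 ∧ wt Λ'.1 + wt Λ'.2 + n = wt Λ.1 + wt Λ.2 := by
  rcases h with ⟨x, hx1, hx2, rfl⟩ | ⟨x, hx1, hx2, rfl⟩
  · refine ⟨h2.insert x, h1.remove _, ?_⟩
    simp only [Prod.fst, Prod.snd]
    rw [wt_insert h2 hx2, wt_remove h1 hx1]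
    ring
  · refine ⟨h2.remove _, h1.insert x, ?_⟩
    simp only [Prod.fst, Prod.snd]
    rw [wt_insert h1 hx2, wt_remove h2 hx1]
    ring

lemma trivial_bdd : Bdd' trivialSymbol.1 ∧ Bdd' trivialSymbol.2 :=
  ⟨Bdd'_Iic 0, Bdd'_Iic (-1)⟩

lemma trivial_no_cohook {n : ℕ} (hn : 1 ≤ n) (C' : Set ℤ × Set ℤ) :
    ¬ CohookStep n trivialSymbol C' := by
  rintro (⟨x, hx1, hx2, _⟩ | ⟨x, hx1, hx2, _⟩) <;>
    simp only [trivialSymbol, Set.mem_setOf_eq] at hx1 hx2 <;> omega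

lemma chain_to_trivial {n : ℕ} (hn : 1 ≤ n) {Λ : Set ℤ × Set ℤ}
    (hB1 : Bdd' Λ.1) (hB2 : Bdd' Λ.2)
    (hwt : wt Λ.1 + wt Λ.2 = 2 * n)
    (hchain : Relation.ReflTransGen (CohookStep n) Λ trivialSymbol) :
    ∃ Λ₁, CohookStep n Λ Λ₁ ∧ CohookStep n Λ₁ trivialSymbol := by
  have htriv : wt trivialSymbol.1 + wt trivialSymbol.2 = 0 := by
    show wt {z : ℤ | z ≤ 0} + wt {z : ℤ | z ≤ -1} = 0
    rw [wt_Iic_zero, wt_Iic_neg_one]; ring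
  rcases Relation.ReflTransGen.cases_head hchain with heq | ⟨Λ₁, hstep1, hchain1⟩
  · rw [heq, htriv] at hwt; omega
  obtain ⟨hB1', hB2', hwt1⟩ := cohook_wt hstep1 hB1 hB2
  rcases Relation.ReflTransGen.cases_head hchain1 with heq | ⟨Λ₂, hstep2, hchain2⟩
  · rw [heq, htriv] at hwt1; omega
  obtain ⟨hB1'', hB2'', hwt2⟩ := cohook_wt hstep2 hB1' hB2'
  rcases Relation.ReflTransGen.cases_head hchain2 with heq | ⟨Λ₃, hstep3, _⟩
  · exact ⟨Λ₁, hstep1, heq ▸ hstep2⟩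
  · exfalso
    obtain ⟨_, _, hwt3⟩ := cohook_wt hstep3 hB1'' hB2''
    have g1 := wt_nonneg Λ₃.1
    have g2 := wt_nonneg Λ₃.2
    omega

lemma sort_coe_of_sorted {L : List ℕ} (h : L.Pairwise (· ≤ ·)) :
    Multiset.sort (↑L) (· ≤ ·) = L := by
  apply List.Perm.eq_of_pairwise (fun a b _ _ h1 h2 => le_antisymm h1 h2) (Multiset.pairwise_sort _ _) h
  rw [← Multiset.coe_eq_coe, Multiset.sort_eq]

lemma getD_replicate_append (a x : ℕ) (L : List ℕ) (k : ℕ) :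
    (List.replicate a x ++ L).getD k 0 = if k < a then x else L.getD (k - a) 0 := by
  rcases lt_or_ge k a with h | h
  · rw [List.getD_append _ _ _ _ (by simpa using h)]
    simp [h, List.getD_eq_getElem, List.getElem_replicate]
  · rw [List.getD_append_right _ _ _ _ (by simpa using h)]
    simp [h, not_lt.mpr h, List.length_replicate]

lemma getD_replicate (a x k : ℕ) : (List.replicate a x).getD k 0 = if k < a then x else 0 := by
  conv_lhs => rw [← List.append_nil (List.replicate a x)]
  rw [getD_replicate_append]
  simp

lemma parts_two_one (i d : ℕ) :
    (Partition'.ofMul (Multiset.replicate i 2 + Multiset.replicate d 1)).parts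
      = fun k => if k < i then 2 else if k < i + d then 1 else 0 := by
  have hm : Multiset.replicate i 2 + Multiset.replicate d 1
      = (↑((List.replicate d 1 ++ List.replicate i 2 : List ℕ)) : Multiset ℕ) := by
    rw [← Multiset.coe_replicate, ← Multiset.coe_replicate, ← Multiset.coe_add]
    exact Multiset.coe_eq_coe.mpr List.perm_append_comm
  have hsorted : (List.replicate d 1 ++ List.replicate i 2).Pairwise (· ≤ ·) := by
    rw [List.pairwise_append]
    refine ⟨List.pairwise_replicate.mpr (Or.inr (le_refl 1)),
      List.pairwise_replicate.mpr (Or.inr (le_refl 2)), ?_⟩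
    intro x hx y hy
    rw [List.eq_of_mem_replicate hx, List.eq_of_mem_replicate hy]
    omega
  funext k
  show ((Multiset.sort _ (· ≤ ·)).reverse).getD k 0 = _
  rw [hm, sort_coe_of_sorted hsorted, List.reverse_append, List.reverse_replicate,
    List.reverse_replicate, getD_replicate_append, getD_replicate]
  split_ifs <;> omega

lemma parts_pair (a b : ℕ) (hba : b ≤ a) :
    (Partition'.ofMul {a, b}).parts = fun k => if k = 0 then a else if k = 1 then b else 0 := by
  have hm : ({a, b} : Multiset ℕ) = (↑([b, a]) : Multiset ℕ) := by
    show a ::ₘ b ::ₘ 0 = (b ::ₘ a ::ₘ 0 : Multiset ℕ)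
    rw [Multiset.cons_swap]
  have hsorted : ([b, a] : List ℕ).Pairwise (· ≤ ·) := by
    simp [hba]
  funext k
  show ((Multiset.sort _ (· ≤ ·)).reverse).getD k 0 = _
  rw [hm, sort_coe_of_sorted hsorted]
  match k with
  | 0 => rfl
  | 1 => rfl
  | (m+2) => simp [List.getD]

lemma range_two_one (i j : ℕ) (hij : i < j) :
    Set.range (betaSet
        (Partition'.ofMul (Multiset.replicate i 2 + Multiset.replicate (j - i - 1) 1)) (-2))
      = {z : ℤ | z ≤ 0 ∧ z ≠ -(i : ℤ) ∧ z ≠ -(j : ℤ)} := by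
  have hparts := parts_two_one i (j - i - 1)
  ext z
  simp only [Set.mem_range, Set.mem_setOf_eq]
  constructor
  · rintro ⟨k, rfl⟩
    simp only [betaSet, hparts]
    split_ifs <;> push_cast <;> omega
  · rintro ⟨hz0, hzi, hzj⟩
    rcases lt_or_ge (-(i : ℤ)) z with h1 | h1
    · refine ⟨(-z).toNat, ?_⟩
      simp only [betaSet, hparts]
      split_ifs <;> push_cast <;> omega
    rcases lt_or_ge (-(j : ℤ)) z with h2 | h2
    · refine ⟨(-z - 1).toNat, ?_⟩
      simp only [betaSet, hparts]
      split_ifs <;> push_cast <;> omega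
    · refine ⟨(-z - 2).toNat, ?_⟩
      simp only [betaSet, hparts]
      split_ifs <;> push_cast <;> omega

lemma range_pair (a b : ℕ) (hba : b ≤ a) :
    Set.range (betaSet (Partition'.ofMul {a, b}) 1)
      = {z : ℤ | z ≤ -1 ∨ z = (a : ℤ) + 1 ∨ z = (b : ℤ)} := by
  have hparts := parts_pair a b hba
  ext z
  simp only [Set.mem_range, Set.mem_setOf_eq]
  constructor
  · rintro ⟨k, rfl⟩
    simp only [betaSet, hparts]
    split_ifs <;> push_cast <;> omega
  · rintro (hz | hz | hz)
    · refine ⟨(1 - z).toNat, ?_⟩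
      simp only [betaSet, hparts]
      split_ifs <;> push_cast <;> omega
    · refine ⟨0, ?_⟩
      simp only [betaSet, hparts]
      norm_num
      omega
    · refine ⟨1, ?_⟩
      simp only [betaSet, hparts]
      norm_num
      omega

lemma sigma1 : sigmaT 1 = (-2, 1) := by
  have : ¬ Even (1 : ℕ) := by decide
  simp only [sigmaT, this, if_false, Nat.cast_one]
  norm_num

lemma symbolOf_eq (l : Bipartition) :
    symbolOf l (sigmaT 1)
      = (Set.range (betaSet l.1 (-2)), Set.range (betaSet l.2 1)) := by
  rw [sigma1]
  rfl

lemma forward_main {n i j : ℕ} (hn : 1 ≤ n) (hij : i < j) (hjn : j ≤ n) :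
    IsCocore n (symbolOf (bip (Multiset.replicate i 2 + Multiset.replicate (j - i - 1) 1)
      ({n - i - 1, n - j} : Multiset ℕ)) (sigmaT 1)) trivialSymbol := by
  have hba : n - j ≤ n - i - 1 := by omega
  have hsym : symbolOf (bip (Multiset.replicate i 2 + Multiset.replicate (j - i - 1) 1)
      ({n - i - 1, n - j} : Multiset ℕ)) (sigmaT 1)
      = ({z : ℤ | z ≤ 0 ∧ z ≠ -(i : ℤ) ∧ z ≠ -(j : ℤ)},
         {z : ℤ | z ≤ -1 ∨ z = ((n - i - 1 : ℕ) : ℤ) + 1 ∨ z = ((n - j : ℕ) : ℤ)}) := by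
    rw [symbolOf_eq]
    show (Set.range (betaSet (Partition'.ofMul _) (-2)),
      Set.range (betaSet (Partition'.ofMul _) 1)) = _
    rw [range_two_one i j hij, range_pair _ _ hba]
  rw [hsym]
  constructor
  · refine Relation.ReflTransGen.head (b := ({z : ℤ | z ≤ -1 ∨ z = (n : ℤ) - (j : ℤ)},
      {z : ℤ | z ≤ 0 ∧ z ≠ -(j : ℤ)})) ?_ (Relation.ReflTransGen.head ?_ Relation.ReflTransGen.refl)
    · refine Or.inr ⟨-(i : ℤ), ?_, ?_, ?_⟩
      · show _ ∈ {z : ℤ | z ≤ -1 ∨ z = ((n - i - 1 : ℕ) : ℤ) + 1 ∨ z = ((n - j : ℕ) : ℤ)}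
        simp only [Set.mem_setOf_eq]
        omega
      · show ¬ _
        simp only [Set.mem_setOf_eq]
        omega
      · refine Prod.ext_iff.mpr ⟨?_, ?_⟩
        · ext z
          simp only [Set.mem_setOf_eq, Set.mem_diff, Set.mem_singleton_iff]
          omega
        · ext z
          simp only [Set.mem_setOf_eq, Set.mem_union, Set.mem_singleton_iff]
          omega
    · refine Or.inl ⟨-(j : ℤ), ?_, ?_, ?_⟩
      · show _ ∈ {z : ℤ | z ≤ -1 ∨ z = (n : ℤ) - (j : ℤ)}
        simp only [Set.mem_setOf_eq]
        omega
      · show ¬ _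
        simp only [Set.mem_setOf_eq]
        omega
      · refine Prod.ext_iff.mpr ⟨?_, ?_⟩
        · show {z : ℤ | z ≤ 0} = _
          ext z
          simp only [Set.mem_setOf_eq, Set.mem_union, Set.mem_singleton_iff]
          omega
        · show {z : ℤ | z ≤ -1} = _
          ext z
          simp only [Set.mem_setOf_eq, Set.mem_diff, Set.mem_singleton_iff]
          omega
  · exact fun C' => trivial_no_cohook hn C'

lemma setof_union (c : ℤ) (w : ℤ) :
    {z : ℤ | z ≤ c ∨ z = w} = {z : ℤ | z ≤ c} ∪ {w} := by
  ext z; simp only [Set.mem_setOf_eq, Set.mem_union, Set.mem_singleton_iff]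

lemma setof_diff (c : ℤ) (w : ℤ) :
    {z : ℤ | z ≤ c ∧ z ≠ w} = {z : ℤ | z ≤ c} \ {w} := by
  ext z; simp only [Set.mem_setOf_eq, Set.mem_diff, Set.mem_singleton_iff]

lemma build_lb2 {n : ℕ} (hn : 1 ≤ n) (l : Bipartition) (x y : ℤ)
    (hyn : -(n : ℤ) ≤ y) (hxy : y < x) (hx0 : x ≤ 0)
    (hX : Set.range (betaSet l.1 (-2)) = {z : ℤ | z ≤ 0 ∧ z ≠ x ∧ z ≠ y})
    (hY : Set.range (betaSet l.2 1) = {z : ℤ | z ≤ -1 ∨ z = x + n ∨ z = y + n}) :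
    l ∈ LB2 n := by
  set i := (-x).toNat with hi
  set j := (-y).toNat with hj
  have hix : (i : ℤ) = -x := by omega
  have hjy : (j : ℤ) = -y := by omega
  have hij : i < j := by omega
  have hjn : j ≤ n := by omega
  have h1 : l.1 = Partition'.ofMul (Multiset.replicate i 2 + Multiset.replicate (j - i - 1) 1) := by
    apply beta_range_inj (s := -2)
    rw [hX, range_two_one i j hij]
    ext z
    simp only [Set.mem_setOf_eq]
    omega
  have h2 : l.2 = Partition'.ofMul {n - i - 1, n - j} := by
    apply beta_range_inj (s := 1)
    rw [hY, range_pair (n - i - 1) (n - j) (by omega)]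
    ext z
    simp only [Set.mem_setOf_eq]
    omega
  exact ⟨i, j, hij, hjn, Prod.ext_iff.mpr ⟨h1, h2⟩⟩

lemma converse_main {n : ℕ} (hn : 1 ≤ n) (l : Bipartition)
    (hsize : Bipartition.size l = 2 * n - 2)
    (hchain : Relation.ReflTransGen (CohookStep n) (symbolOf l (sigmaT 1)) trivialSymbol) :
    l ∈ LB2 n := by
  have hsz : l.1.size + l.2.size = 2 * n - 2 := hsize
  rw [symbolOf_eq] at hchain
  set X := Set.range (betaSet l.1 (-2)) with hX
  set Y := Set.range (betaSet l.2 1) with hY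
  have hBX : Bdd' X := Bdd'_beta _ _
  have hBY : Bdd' Y := Bdd'_beta _ _
  have hwtX : wt X = l.1.size + 1 := by rw [hX, wt_betaSet, wt_Iic_neg_two]
  have hwtY : wt Y = l.2.size + 1 := by rw [hY, wt_betaSet, wt_Iic_one]
  have hchY : ch Y = 1 := by rw [hY, ch_betaSet, ch_Iic_one]
  have hwt : wt (X, Y).1 + wt (X, Y).2 = 2 * n := by
    show wt X + wt Y = 2 * (n : ℤ)
    rw [hwtX, hwtY]
    omega
  obtain ⟨Λ₁, hstep1, hstep2⟩ := chain_to_trivial hn hBX hBY hwt hchain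
  -- the possible values of ch Λ₁.1 from the first step
  have hch1 : ch Λ₁.1 = 2 ∨ ch Λ₁.1 = 0 := by
    rcases hstep1 with ⟨y, hy1, hy2, heq1⟩ | ⟨y, hy1, hy2, heq1⟩
    · left
      have : Λ₁.1 = Y ∪ {y} := congrArg Prod.fst heq1
      rw [this, ch_insert hBY hy2, hchY]; ring
    · right
      have : Λ₁.1 = Y \ {y + n} := congrArg Prod.fst heq1
      rw [this, ch_remove hBY hy1, hchY]; ring
  -- analyze the second step: Λ₁ is explicit
  have key : ∃ x y : ℤ, -(n : ℤ) ≤ x ∧ x ≤ 0 ∧ -(n : ℤ) ≤ y ∧ y ≤ 0 ∧ x ≠ y ∧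
      X = {z : ℤ | z ≤ 0 ∧ z ≠ x ∧ z ≠ y} ∧
      Y = {z : ℤ | z ≤ -1 ∨ z = x + n ∨ z = y + n} := by
    rcases hstep2 with ⟨x, hx1, hx2, heq⟩ | ⟨x, hx1, hx2, heq⟩
    · -- second step of type 1
      have h1 : {z : ℤ | z ≤ 0} = Λ₁.2 ∪ {x} := congrArg Prod.fst heq
      have h2 : {z : ℤ | z ≤ -1} = Λ₁.1 \ {x + n} := congrArg Prod.snd heq
      have hxle : x ≤ 0 := by
        have : x ∈ {z : ℤ | z ≤ 0} := by rw [h1]; exact Set.mem_union_right _ rfl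
        exact this
      have hxnge : ¬ (x + n ≤ -1) := by
        intro hc
        have : (x + n : ℤ) ∈ {z : ℤ | z ≤ -1} := hc
        rw [h2] at this
        exact this.2 rfl
      have e2 : Λ₁.2 = {z : ℤ | z ≤ 0 ∧ z ≠ x} := by
        ext z
        simp only [Set.mem_setOf_eq]
        constructor
        · intro hz
          have hz0 : z ∈ {z : ℤ | z ≤ 0} := by rw [h1]; exact Set.mem_union_left _ hz
          exact ⟨hz0, fun hc => hx2 (hc ▸ hz)⟩
        · rintro ⟨hz0, hzx⟩
          have : z ∈ Λ₁.2 ∪ {x} := by rw [← h1]; exact hz0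
          rcases this with h | h
          · exact h
          · exact absurd h hzx
      have e1 : Λ₁.1 = {z : ℤ | z ≤ -1 ∨ z = x + n} := by
        ext z
        simp only [Set.mem_setOf_eq]
        constructor
        · intro hz
          by_cases hzx : z = x + n
          · exact Or.inr hzx
          · have : z ∈ Λ₁.1 \ {x + n} := ⟨hz, hzx⟩
            rw [← h2] at this
            exact Or.inl this
        · rintro (hz | hz)
          · have : z ∈ {z : ℤ | z ≤ -1} := hz
            rw [h2] at this
            exact this.1
          · exact hz ▸ hx1
      -- compute ch Λ₁.1 : must be 0, so first step is of type 2
      have hch0 : ch Λ₁.1 = 0 := by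
        rw [e1, setof_union, ch_insert (Bdd'_Iic (-1)) (by simp only [Set.mem_setOf_eq]; omega),
          ch_Iic_neg_one]
        ring
      rcases hstep1 with ⟨y, hy1, hy2, heq1⟩ | ⟨y, hy1, hy2, heq1⟩
      · exfalso
        have : Λ₁.1 = Y ∪ {y} := congrArg Prod.fst heq1
        rw [this, ch_insert hBY hy2, hchY] at hch0
        omega
      · -- surviving case
        have g1 : Λ₁.1 = Y \ {y + n} := congrArg Prod.fst heq1
        have g2 : Λ₁.2 = X ∪ {y} := congrArg Prod.snd heq1
        have hyX : y ∉ X := hy2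
        have hyY : (y + n : ℤ) ∈ Y := hy1
        have hy0 : y ≤ 0 ∧ y ≠ x := by
          have : y ∈ {z : ℤ | z ≤ 0 ∧ z ≠ x} := by
            rw [← e2, g2]; exact Set.mem_union_right _ rfl
          exact this
        have hynn : ¬ (y + n ≤ -1) ∧ y + n ≠ x + n := by
          have h3 : (y + n : ℤ) ∉ {z : ℤ | z ≤ -1 ∨ z = x + n} := by
            rw [← e1, g1]
            exact fun hc => hc.2 rfl
          simp only [Set.mem_setOf_eq, not_or] at h3
          exact h3
        have fX : X = {z : ℤ | z ≤ 0 ∧ z ≠ x ∧ z ≠ y} := by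
          have hXy : X ∪ {y} = {z : ℤ | z ≤ 0 ∧ z ≠ x} := by rw [← g2, e2]
          ext z
          simp only [Set.mem_setOf_eq]
          constructor
          · intro hz
            have : z ∈ {z : ℤ | z ≤ 0 ∧ z ≠ x} := by
              rw [← hXy]; exact Set.mem_union_left _ hz
            exact ⟨this.1, this.2, fun hc => hyX (hc ▸ hz)⟩
          · rintro ⟨hz0, hzx, hzy⟩
            have : z ∈ X ∪ {y} := by rw [hXy]; exact ⟨hz0, hzx⟩
            rcases this with h | h
            · exact h
            · exact absurd h hzy
        have fY : Y = {z : ℤ | z ≤ -1 ∨ z = x + n ∨ z = y + n} := by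
          have hYy : Y \ {y + n} = {z : ℤ | z ≤ -1 ∨ z = x + n} := by rw [← g1, e1]
          ext z
          simp only [Set.mem_setOf_eq]
          constructor
          · intro hz
            by_cases hzy : z = y + n
            · exact Or.inr (Or.inr hzy)
            · have : z ∈ {z : ℤ | z ≤ -1 ∨ z = x + n} := by
                rw [← hYy]; exact ⟨hz, hzy⟩
              rcases this with h | h
              · exact Or.inl h
              · exact Or.inr (Or.inl h)
          · rintro (hz | hz | hz)
            · have : z ∈ Y \ {y + n} := by rw [hYy]; exact Or.inl hz
              exact this.1
            · have : z ∈ Y \ {y + n} := by rw [hYy]; exact Or.inr hz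
              exact this.1
            · exact hz ▸ hyY
        exact ⟨x, y, by omega, hxle, by omega, hy0.1, fun hc => hy0.2 hc.symm, fX, fY⟩
    · -- second step of type 2 : impossible by charges
      exfalso
      have h1 : {z : ℤ | z ≤ 0} = Λ₁.2 \ {x + n} := congrArg Prod.fst heq
      have h2 : {z : ℤ | z ≤ -1} = Λ₁.1 ∪ {x} := congrArg Prod.snd heq
      have hxle : x ≤ -1 := by
        have : x ∈ {z : ℤ | z ≤ -1} := by rw [h2]; exact Set.mem_union_right _ rfl
        exact this
      have e1 : Λ₁.1 = {z : ℤ | z ≤ -1 ∧ z ≠ x} := by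
        ext z
        simp only [Set.mem_setOf_eq]
        constructor
        · intro hz
          have hz0 : z ∈ {z : ℤ | z ≤ -1} := by rw [h2]; exact Set.mem_union_left _ hz
          exact ⟨hz0, fun hc => hx2 (hc ▸ hz)⟩
        · rintro ⟨hz0, hzx⟩
          have : z ∈ Λ₁.1 ∪ {x} := by rw [← h2]; exact hz0
          rcases this with h | h
          · exact h
          · exact absurd h hzx
      have hchm2 : ch Λ₁.1 = -2 := by
        rw [e1, setof_diff, ch_remove (Bdd'_Iic (-1)) (by simp only [Set.mem_setOf_eq]; omega),
          ch_Iic_neg_one]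
        ring
      omega
  obtain ⟨x, y, hxn, hx0, hyn, hy0, hxy, fX, fY⟩ := key
  rcases lt_or_gt_of_ne hxy with h | h
  · apply build_lb2 hn l y x hxn h hy0
    · rw [← hX, fX]; ext z; simp only [Set.mem_setOf_eq]; tauto
    · rw [← hY, fY]; ext z; simp only [Set.mem_setOf_eq]; tauto
  · exact build_lb2 hn l x y hyn h hx0 (by rw [← hX, fX]) (by rw [← hY, fY])

lemma list_sum_getD (L : List ℕ) : ∑ k ∈ Finset.range L.length, L.getD k 0 = L.sum := by
  induction L with
  | nil => simp
  | cons a L ih =>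
    rw [List.length_cons, Finset.sum_range_succ']
    simp only [List.getD_cons_succ, List.getD_cons_zero, List.sum_cons]
    omega

lemma size_ofMul (m : Multiset ℕ) : (Partition'.ofMul m).size = m.sum := by
  have hfind : Nat.find (Partition'.ofMul m).exists_zero
      ≤ ((Multiset.sort m (· ≤ ·)).reverse).length :=
    Nat.find_le (List.getD_eq_default _ _ le_rfl)
  rw [size_eq _ hfind]
  show ∑ k ∈ Finset.range ((Multiset.sort m (· ≤ ·)).reverse).length,
    ((Multiset.sort m (· ≤ ·)).reverse).getD k 0 = m.sum
  rw [list_sum_getD, List.sum_reverse]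
  conv_rhs => rw [← Multiset.sort_eq m (· ≤ ·)]
  exact (Multiset.sum_coe _).symm

lemma lb2_size {n : ℕ} (hn : 1 ≤ n) {l : Bipartition} (hl : l ∈ LB2 n) :
    Bipartition.size l = 2 * n - 2 := by
  obtain ⟨i, j, hij, hjn, rfl⟩ := hl
  show (Partition'.ofMul _).size + (Partition'.ofMul _).size = _
  rw [size_ofMul, size_ofMul]
  rw [Multiset.sum_add, Multiset.sum_replicate, Multiset.sum_replicate]
  have h2 : ({n - i - 1, n - j} : Multiset ℕ).sum = (n - i - 1) + (n - j) := by
    rw [Multiset.insert_eq_cons, Multiset.sum_cons, Multiset.sum_singleton]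
  rw [h2]
  simp only [smul_eq_mul]
  omega

lemma T_mem (n : ℕ) (q : ℕ × ℕ) :
    q ∈ (Finset.range (n + 1)).biUnion (fun j => (Finset.range j).image fun i => (i, j))
      ↔ q.1 < q.2 ∧ q.2 ≤ n := by
  simp only [Finset.mem_biUnion, Finset.mem_image, Finset.mem_range]
  constructor
  · rintro ⟨j, hj, i, hi, rfl⟩
    exact ⟨by omega, by omega⟩
  · rintro ⟨h1, h2⟩
    exact ⟨q.2, by omega, q.1, h1, rfl⟩

lemma T_card (n : ℕ) :
    ((Finset.range (n + 1)).biUnion (fun j => (Finset.range j).image fun i => (i, j))).card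
      = n * (n + 1) / 2 := by
  rw [Finset.card_biUnion]
  · have hc : ∀ j : ℕ, ((Finset.range j).image (fun i => (i, j))).card = j := by
      intro j
      rw [Finset.card_image_of_injective _ (fun a b hab => (Prod.ext_iff.mp hab).1),
        Finset.card_range]
    rw [Finset.sum_congr rfl (fun j _ => hc j)]
    have h : (∑ i ∈ Finset.range (n + 1), i) * 2 = n * (n + 1) := by
      rw [Finset.sum_range_id_mul_two]
      simp only [Nat.add_sub_cancel]
      ring
    set m := n * (n + 1) with hm
    omega
  · intro a _ b _ hab
    rw [Function.onFun, Finset.disjoint_left]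
    rintro q hqa hqb
    simp only [Finset.mem_image, Finset.mem_range] at hqa hqb
    obtain ⟨i, _, rfl⟩ := hqa
    obtain ⟨i', _, heq⟩ := hqb
    exact hab (Prod.ext_iff.mp heq).2.symm

lemma lb2_eq_image (n : ℕ) :
    LB2 n = (fun q : ℕ × ℕ =>
        bip (Multiset.replicate q.1 2 + Multiset.replicate (q.2 - q.1 - 1) 1)
          {n - q.1 - 1, n - q.2}) ''
      ↑((Finset.range (n + 1)).biUnion (fun j => (Finset.range j).image fun i => (i, j))) := by
  ext l
  simp only [Set.mem_image, Finset.mem_coe]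
  constructor
  · rintro ⟨i, j, hij, hjn, rfl⟩
    exact ⟨(i, j), (T_mem n (i, j)).mpr ⟨hij, hjn⟩, rfl⟩
  · rintro ⟨q, hq, rfl⟩
    obtain ⟨h1, h2⟩ := (T_mem n q).mp hq
    exact ⟨q.1, q.2, h1, h2, rfl⟩

set_option maxHeartbeats 1000000 in
lemma F_injOn (n : ℕ) :
    Set.InjOn (fun q : ℕ × ℕ =>
        bip (Multiset.replicate q.1 2 + Multiset.replicate (q.2 - q.1 - 1) 1)
          {n - q.1 - 1, n - q.2})
      ↑((Finset.range (n + 1)).biUnion (fun j => (Finset.range j).image fun i => (i, j))) := by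
  intro q hq q' hq' hFq
  obtain ⟨ha1, ha2⟩ := (T_mem n q).mp (Finset.mem_coe.mp hq)
  obtain ⟨hb1, hb2⟩ := (T_mem n q').mp (Finset.mem_coe.mp hq')
  have hfst : Partition'.ofMul (Multiset.replicate q.1 2 + Multiset.replicate (q.2 - q.1 - 1) 1)
      = Partition'.ofMul (Multiset.replicate q'.1 2 + Multiset.replicate (q'.2 - q'.1 - 1) 1) :=
    congrArg Prod.fst hFq
  have hp := congrArg Partition'.parts hfst
  rw [parts_two_one, parts_two_one] at hp
  have e1 := congrFun hp q.1
  have e2 := congrFun hp q'.1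
  have e3 := congrFun hp (q.2 - 1)
  have e4 := congrFun hp (q'.2 - 1)
  have : q.1 = q'.1 ∧ q.2 = q'.2 := by
    split_ifs at e1 e2 e3 e4 <;> omega
  exact Prod.ext_iff.mpr ⟨this.1, this.2⟩

end Aux

/-- The bipartitions of `2n - 2` whose symbol of charge `σ₁ = (-2,1)`
has `n`-co-core the trivial symbol are exactly the members of `LB2 n`, and there are
exactly `n(n+1)/2` of them. -/
theorem decomposition_numbers_stmt4 (n : ℕ) (hn : 1 ≤ n) :
    (∀ l : Bipartition, Bipartition.size l = 2 * n - 2 →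
        (IsCocore n (symbolOf l (sigmaT 1)) trivialSymbol ↔ l ∈ LB2 n)) ∧
    {l : Bipartition | Bipartition.size l = 2 * n - 2 ∧
        IsCocore n (symbolOf l (sigmaT 1)) trivialSymbol}.Finite ∧
    {l : Bipartition | Bipartition.size l = 2 * n - 2 ∧
        IsCocore n (symbolOf l (sigmaT 1)) trivialSymbol}.ncard = n * (n + 1) / 2 := by
  have hmain : ∀ l : Bipartition, Bipartition.size l = 2 * n - 2 →
      (IsCocore n (symbolOf l (sigmaT 1)) trivialSymbol ↔ l ∈ LB2 n) := by
    intro l hl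
    constructor
    · intro h
      exact converse_main hn l hl h.1
    · rintro ⟨i, j, hij, hjn, rfl⟩
      exact forward_main hn hij hjn
  have hset : {l : Bipartition | Bipartition.size l = 2 * n - 2 ∧
      IsCocore n (symbolOf l (sigmaT 1)) trivialSymbol} = LB2 n := by
    ext l
    simp only [Set.mem_setOf_eq]
    constructor
    · rintro ⟨hs, hc⟩
      exact (hmain l hs).mp hc
    · intro hl
      exact ⟨lb2_size hn hl, (hmain l (lb2_size hn hl)).mpr hl⟩
  refine ⟨hmain, ?_, ?_⟩
  · rw [hset, lb2_eq_image n]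
    exact Set.Finite.image _ (Finset.finite_toSet _)
  · rw [hset, lb2_eq_image n, Set.ncard_image_of_injOn (F_injOn n), Set.ncard_coe_finset,
      T_card n]
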